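/- Let A = (a_{ij}) be an n×n non-scalar complex matrix, and suppose A has an eigenvector x = (x₁, …, xₙ) with A·x = λ·x, all entries xᵢ ≠ 0, and λ a simple root of the characteristic polynomial of A. Let γ₁, …, γₙ be complex numbers with γ₁ + ⋯ + γₙ = tr A. Then there exists a matrix B similar to A with diagonal entries B_{ii} = γᵢ for i = 1, …, n; explicitly, one may take B = D⁻¹AD + e·qᵀ, where D = diag(x₁, …, xₙ), e is the all-ones vector, and qᵢ = γᵢ − a_{ii}. -/

import Mathlib

open Polynomial Matrix
open Module

variable {n : ℕ}

lemma sjf_charpoly_conj (P A : Matrix (Fin n) (Fin n) ℂ) (hP : IsUnit P.det) :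
    (P⁻¹ * A * P).charpoly = A.charpoly := by
  have h1 : P⁻¹ * P = 1 := Matrix.nonsing_inv_mul P hP
  set f := ((Polynomial.C : ℂ →+* ℂ[X]).mapMatrix :
    Matrix (Fin n) (Fin n) ℂ →+* Matrix (Fin n) (Fin n) ℂ[X]) with hf
  have key : f P⁻¹ * charmatrix A * f P = charmatrix (P⁻¹ * A * P) := by
    simp only [charmatrix]
    rw [mul_sub, sub_mul]
    congr 1
    · rw [← (Matrix.scalar_commute (X : ℂ[X]) (fun r' => Commute.all _ _) (f P⁻¹)).eq]
      rw [Matrix.mul_assoc, ← _root_.map_mul, h1, _root_.map_one, Matrix.mul_one]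
    · rw [← _root_.map_mul, ← _root_.map_mul]
  have hdet : (f P⁻¹).det * (f P).det = 1 := by
    rw [← Matrix.det_mul, ← _root_.map_mul, h1, _root_.map_one, Matrix.det_one]
  unfold Matrix.charpoly
  rw [← key, Matrix.det_mul, Matrix.det_mul, mul_comm ((f P⁻¹).det), mul_assoc, hdet, mul_one]

lemma sjf_charpoly_transpose (A : Matrix (Fin n) (Fin n) ℂ) :
    Aᵀ.charpoly = A.charpoly := by
  unfold Matrix.charpoly
  rw [← Matrix.det_transpose (charmatrix Aᵀ)]
  congr 1
  ext i j : 2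
  by_cases h : i = j
  · subst h; simp
  · rw [Matrix.transpose_apply, charmatrix_apply_ne _ _ _ h,
      charmatrix_apply_ne _ _ _ (Ne.symm h), Matrix.transpose_apply]

lemma sjf_charpoly_shift (A : Matrix (Fin n) (Fin n) ℂ) (lam : ℂ) :
    (A - lam • 1).charpoly = A.charpoly.comp (X + C lam) := by
  rw [comp_eq_aeval]
  unfold Matrix.charpoly
  rw [← AlgHom.coe_toRingHom, RingHom.map_det]
  congr 1
  rw [RingHom.mapMatrix_apply]
  refine Matrix.ext fun i j => ?_
  by_cases h : i = j
  · subst h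
    simp only [Matrix.map_apply, charmatrix_apply_eq, map_sub, AlgHom.toRingHom_eq_coe,
      AlgHom.coe_toRingHom, RingHom.coe_coe, aeval_X, aeval_C, Polynomial.algebraMap_eq,
      Matrix.sub_apply, Matrix.smul_apply, Matrix.one_apply_eq, smul_eq_mul, mul_one]
    ring
  · simp only [Matrix.map_apply, charmatrix_apply_ne _ _ _ h, map_neg, AlgHom.toRingHom_eq_coe,
      AlgHom.coe_toRingHom, RingHom.coe_coe, aeval_C, Polynomial.algebraMap_eq,
      Matrix.sub_apply, Matrix.smul_apply, Matrix.one_apply_ne h, smul_eq_mul, mul_zero, sub_zero]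

lemma sjf_ker_structure (N : Matrix (Fin n) (Fin n) ℂ)
    (hmult : N.charpoly.rootMultiplicity 0 = 1)
    (e : Fin n → ℂ) (he : e ≠ 0) (heK : N *ᵥ e = 0) :
    (∀ v : Fin n → ℂ, N *ᵥ v = 0 → ∃ c : ℂ, v = c • e) ∧
    (∀ v : Fin n → ℂ, N *ᵥ (N *ᵥ v) = 0 → N *ᵥ v = 0) := by
  set φ : Module.End ℂ (Fin n → ℂ) := Matrix.toLin' N with hφdef
  have hφ : ∀ v, φ v = N *ᵥ v := fun v => Matrix.toLin'_apply N v
  have hchar : φ.charpoly = N.charpoly := by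
    rw [← LinearMap.charpoly_toMatrix φ (Pi.basisFun ℂ (Fin n)),
      LinearMap.toMatrix_eq_toMatrix', hφdef, LinearMap.toMatrix'_toLin']
  have hfr : finrank ℂ (φ.maxGenEigenspace 0) = 1 := by
    rw [LinearMap.finrank_maxGenEigenspace_zero_eq, hchar,
      ← Polynomial.rootMultiplicity_eq_natTrailingDegree', hmult]
  have hkmax : ∀ k : ℕ, LinearMap.ker (φ ^ k) ≤ φ.maxGenEigenspace 0 := by
    intro k v hv
    rw [Module.End.mem_maxGenEigenspace]
    exact ⟨k, by simpa using hv⟩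
  have h1 : Submodule.span ℂ {e} ≤ LinearMap.ker φ := by
    rw [Submodule.span_singleton_le_iff_mem]
    exact LinearMap.mem_ker.2 (by rw [hφ, heK])
  have hsp : finrank ℂ (Submodule.span ℂ ({e} : Set (Fin n → ℂ))) = 1 :=
    finrank_span_singleton he
  have hle21 : LinearMap.ker φ ≤ LinearMap.ker (φ ^ 2) := by
    intro v hv
    rw [LinearMap.mem_ker] at hv ⊢
    rw [pow_two, Module.End.mul_apply, hv, map_zero]
  have e1 : Submodule.span ℂ {e} = LinearMap.ker (φ ^ 2) :=
    Submodule.eq_of_le_of_finrank_le (h1.trans hle21)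
      (by rw [hsp]; exact (Submodule.finrank_mono (hkmax 2)).trans (le_of_eq hfr))
  have e2 : Submodule.span ℂ {e} = LinearMap.ker φ :=
    le_antisymm h1 (by rw [e1]; exact hle21)
  constructor
  · intro v hv
    have : v ∈ Submodule.span ℂ ({e} : Set (Fin n → ℂ)) := by
      rw [e2, LinearMap.mem_ker, hφ, hv]
    obtain ⟨c, hc⟩ := Submodule.mem_span_singleton.1 this
    exact ⟨c, hc.symm⟩
  · intro v hv
    have hv2 : v ∈ LinearMap.ker (φ ^ 2) := by
      rw [LinearMap.mem_ker, pow_two, Module.End.mul_apply, hφ, hφ, hv]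
    have : v ∈ LinearMap.ker φ := by rw [← e1] at hv2; rw [← e2]; exact hv2
    rw [LinearMap.mem_ker, hφ] at this; exact this

lemma sjf_surj (N : Matrix (Fin n) (Fin n) ℂ) (e f : Fin n → ℂ) (he : e ≠ 0)
    (heK : N *ᵥ e = 0) (hf : f ≠ 0) (hfK : Nᵀ *ᵥ f = 0)
    (hker : ∀ v, Nᵀ *ᵥ v = 0 → ∃ c : ℂ, v = c • f) :
    ∀ q : Fin n → ℂ, q ⬝ᵥ e = 0 → ∃ p, Nᵀ *ᵥ p = q := by
  set ψ : Module.End ℂ (Fin n → ℂ) := Matrix.toLin' Nᵀ with hψdef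
  have hψ : ∀ v, ψ v = Nᵀ *ᵥ v := Matrix.toLin'_apply Nᵀ
  have hkerψ : LinearMap.ker ψ = Submodule.span ℂ {f} := by
    apply le_antisymm
    · intro v hv
      rw [LinearMap.mem_ker, hψ] at hv
      obtain ⟨c, hc⟩ := hker v hv
      exact Submodule.mem_span_singleton.2 ⟨c, hc.symm⟩
    · rw [Submodule.span_singleton_le_iff_mem]
      exact LinearMap.mem_ker.2 (by rw [hψ, hfK])
  have hfk : finrank ℂ (LinearMap.ker ψ) = 1 := by
    rw [hkerψ]; exact finrank_span_singleton hf
  let g : (Fin n → ℂ) →ₗ[ℂ] ℂ :=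
    { toFun := fun y => y ⬝ᵥ e
      map_add' := fun a b => add_dotProduct a b e
      map_smul' := fun c a => smul_dotProduct c a e }
  have hgsurj : Function.Surjective g := by
    obtain ⟨i, hi⟩ := Function.ne_iff.1 he
    have hi' : e i ≠ 0 := by simpa using hi
    intro z
    refine ⟨Pi.single i (z / e i), ?_⟩
    show Pi.single i (z / e i) ⬝ᵥ e = z
    rw [single_dotProduct]
    field_simp
  have hdim : finrank ℂ (Fin n → ℂ) = n := by simp
  have hgker : finrank ℂ (LinearMap.ker g) + 1 = n := by
    have h1 := LinearMap.finrank_range_add_finrank_ker g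
    rw [hdim, LinearMap.range_eq_top.2 hgsurj] at h1
    simpa [add_comm] using h1
  have hψrk : finrank ℂ (LinearMap.range ψ) + 1 = n := by
    have h1 := LinearMap.finrank_range_add_finrank_ker ψ
    rw [hdim, hfk] at h1
    exact h1
  have hle : LinearMap.range ψ ≤ LinearMap.ker g := by
    rintro v ⟨p, rfl⟩
    show (ψ p) ⬝ᵥ e = 0
    rw [hψ, Matrix.mulVec_transpose, ← Matrix.dotProduct_mulVec, heK, dotProduct_zero]
  have heq : LinearMap.range ψ = LinearMap.ker g :=
    Submodule.eq_of_le_of_finrank_le hle (by omega)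
  intro q hq
  have : q ∈ LinearMap.range ψ := by
    rw [heq]; exact LinearMap.mem_ker.2 hq
  obtain ⟨p, hp⟩ := this
  exact ⟨p, by rw [← hψ]; exact hp⟩


/-- Julio–Soto construction: if `A` is non-scalar with an eigenvector `x` having all
entries nonzero (for a simple eigenvalue `lam`), and `∑ γᵢ = tr A`, then
`B = D⁻¹ A D + e qᵀ` (with `D = diag(x)`, `qᵢ = γᵢ − aᵢᵢ`) is similar to `A` and has
diagonal entries `γ₁, …, γₙ`. -/
theorem soto_julio_fillmore {n : ℕ} (A : Matrix (Fin n) (Fin n) ℂ)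
    (hA : ∀ c : ℂ, A ≠ c • (1 : Matrix (Fin n) (Fin n) ℂ))
    (x : Fin n → ℂ) (lam : ℂ) (hx : ∀ i, x i ≠ 0)
    (hev : A.mulVec x = lam • x)
    (hsimple : A.charpoly.rootMultiplicity lam = 1)
    (γ : Fin n → ℂ) (hγ : ∑ i, γ i = A.trace)
    (B : Matrix (Fin n) (Fin n) ℂ)
    (hB : B = (Matrix.diagonal x)⁻¹ * A * Matrix.diagonal x
          + vecMulVec (fun _ => 1) (fun i => γ i - A i i)) :
    (∃ S : Matrix (Fin n) (Fin n) ℂ, IsUnit S.det ∧ S⁻¹ * A * S = B) ∧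
      ∀ i, B i i = γ i := by
  classical
  rcases Nat.eq_zero_or_pos n with h0 | hpos
  · exfalso
    subst h0
    have h1 : A.charpoly = 1 := Matrix.det_fin_zero
    rw [h1] at hsimple
    rw [Polynomial.rootMultiplicity_eq_zero (by simp [Polynomial.IsRoot])] at hsimple
    exact one_ne_zero hsimple.symm
  set D := Matrix.diagonal x with hD_def
  set e : Fin n → ℂ := fun _ => 1 with he_def
  set q : Fin n → ℂ := fun i => γ i - A i i with hq_def
  set Cm := D⁻¹ * A * D with hC_def
  have hDdet : IsUnit D.det := by
    rw [hD_def, Matrix.det_diagonal]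
    exact (Finset.prod_ne_zero_iff.2 fun i _ => hx i).isUnit
  have hDinv : D⁻¹ = Matrix.diagonal (fun i => (x i)⁻¹) := by
    apply Matrix.inv_eq_right_inv
    rw [hD_def, Matrix.diagonal_mul_diagonal]
    rw [show (fun i => x i * (x i)⁻¹) = fun _ => (1 : ℂ) from funext fun i =>
      mul_inv_cancel₀ (hx i), Matrix.diagonal_one]
  have hCe : Cm *ᵥ e = lam • e := by
    have h1 : D *ᵥ e = x := by
      ext i; simp [hD_def, Matrix.mulVec_diagonal, he_def]
    have h2 : D⁻¹ *ᵥ x = e := by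
      ext i; simp [hDinv, Matrix.mulVec_diagonal, he_def, inv_mul_cancel₀ (hx i)]
    rw [hC_def, ← Matrix.mulVec_mulVec, ← Matrix.mulVec_mulVec, h1, hev, Matrix.mulVec_smul, h2]
  set Nm := Cm - lam • 1 with hN_def
  have hNe : Nm *ᵥ e = 0 := by
    rw [hN_def, Matrix.sub_mulVec, hCe, Matrix.smul_mulVec, Matrix.one_mulVec, sub_self]
  have he0 : e ≠ 0 := by
    intro h
    have := congrFun h ⟨0, hpos⟩
    simp [he_def] at this
  have hcharC : Cm.charpoly = A.charpoly := sjf_charpoly_conj D A hDdet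
  have hmultN : Nm.charpoly.rootMultiplicity 0 = 1 := by
    rw [hN_def, sjf_charpoly_shift, hcharC, ← Polynomial.rootMultiplicity_eq_rootMultiplicity,
      hsimple]
  have hmultNT : Nmᵀ.charpoly.rootMultiplicity 0 = 1 := by
    rw [sjf_charpoly_transpose]; exact hmultN
  have hdetNT : Nmᵀ.det = 0 := by
    rw [Matrix.det_transpose]
    exact Matrix.exists_mulVec_eq_zero_iff.1 ⟨e, he0, hNe⟩
  obtain ⟨f, hf0, hfK⟩ := Matrix.exists_mulVec_eq_zero_iff.2 hdetNT
  obtain ⟨hkerN₁, hkerN₂⟩ := sjf_ker_structure Nm hmultN e he0 hNe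
  obtain ⟨hkerT₁, hkerT₂⟩ := sjf_ker_structure Nmᵀ hmultNT f hf0 hfK
  have hsurj := sjf_surj Nm e f he0 hNe hf0 hfK (by simpa using hkerT₁)
  have hd : f ⬝ᵥ e ≠ 0 := by
    intro hd0
    obtain ⟨g₀, hg₀⟩ := hsurj f hd0
    have h2 : Nmᵀ *ᵥ g₀ = 0 := hkerT₂ g₀ (by rw [hg₀]; exact hfK)
    rw [h2] at hg₀
    exact hf0 hg₀.symm
  have hq : q ⬝ᵥ e = 0 := by
    simp only [hq_def, he_def, dotProduct, mul_one, Finset.sum_sub_distrib, hγ]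
    rw [Matrix.trace]
    simp [Matrix.diag]
  obtain ⟨p, hp⟩ := hsurj q hq
  set s : ℂ := (-2 - p ⬝ᵥ e) / (f ⬝ᵥ e) with hs_def
  set r : Fin n → ℂ := p + s • f with hr_def
  have hre : r ⬝ᵥ e = -2 := by
    rw [hr_def, add_dotProduct, smul_dotProduct, hs_def, smul_eq_mul]
    field_simp
    ring
  have hrq : Nmᵀ *ᵥ r = q := by
    rw [hr_def, Matrix.mulVec_add, Matrix.mulVec_smul, hp, hfK, smul_zero, add_zero]
  have hrsum : ∑ k, r k = -2 := by
    rw [← hre]; simp [dotProduct, he_def]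
  set E := vecMulVec e r with hE_def
  have hEapp : ∀ i j, E i j = r j := fun i j => by
    simp [hE_def, Matrix.vecMulVec_apply, he_def]
  have hEE : E * E = (-2 : ℂ) • E := by
    ext i j
    simp only [Matrix.mul_apply, Matrix.smul_apply, smul_eq_mul, hEapp]
    rw [← Finset.sum_mul, hrsum]
  have hCE : Cm * E = lam • E := by
    ext i j
    simp only [Matrix.mul_apply, Matrix.smul_apply, smul_eq_mul, hEapp]
    rw [← Finset.sum_mul]
    have h1 : ∑ k, Cm i k = lam := by
      have h2 := congrFun hCe i
      simpa [Matrix.mulVec, dotProduct, he_def] using h2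
    rw [h1]
  have hCT : Cmᵀ *ᵥ r = q + lam • r := by
    have h1 : Nmᵀ = Cmᵀ - lam • 1 := by
      rw [hN_def, Matrix.transpose_sub, Matrix.transpose_smul, Matrix.transpose_one]
    rw [h1, Matrix.sub_mulVec, Matrix.smul_mulVec, Matrix.one_mulVec] at hrq
    exact sub_eq_iff_eq_add.1 hrq
  have hEC : E * Cm = vecMulVec e q + lam • E := by
    ext i j
    simp only [Matrix.mul_apply, Matrix.add_apply, Matrix.smul_apply, smul_eq_mul, hEapp,
      Matrix.vecMulVec_apply, he_def, one_mul]
    have h2 := congrFun hCT j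
    simp only [Matrix.mulVec, dotProduct, Matrix.transpose_apply, Pi.add_apply, Pi.smul_apply,
      smul_eq_mul] at h2
    rw [← h2]
    exact Finset.sum_congr rfl fun k _ => mul_comm _ _
  have hQE : vecMulVec e q * E = 0 := by
    ext i j
    simp only [Matrix.mul_apply, Matrix.vecMulVec_apply, he_def, one_mul, hEapp,
      Matrix.zero_apply]
    rw [← Finset.sum_mul]
    have hqsum : ∑ k, q k = 0 := by rw [← hq]; simp [dotProduct, he_def]
    rw [hqsum, zero_mul]
  set S := (1 : Matrix (Fin n) (Fin n) ℂ) + E with hS_def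
  have hSS : S * S = 1 := by
    have expand : S * S = 1 + E + E + E * E := by rw [hS_def]; noncomm_ring
    rw [expand, hEE]
    module
  have hSCS : S * Cm * S = Cm + vecMulVec e q := by
    have expand : S * Cm * S = Cm + Cm * E + (E * Cm + (E * Cm) * E) := by
      rw [hS_def]; noncomm_ring
    rw [expand, hCE, hEC, add_mul, hQE, Matrix.smul_mul, hEE]
    module
  have hSunit : IsUnit S.det :=
    (Matrix.isUnit_iff_isUnit_det S).1 ⟨⟨S, S, hSS, hSS⟩, rfl⟩
  have hBval : B = Cm + vecMulVec e q := hB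
  refine ⟨⟨D * S, ?_, ?_⟩, ?_⟩
  · rw [Matrix.det_mul]
    exact hDdet.mul hSunit
  · have hSinv : S⁻¹ = S := Matrix.inv_eq_right_inv hSS
    rw [Matrix.mul_inv_rev, hSinv, hBval, ← hSCS, hC_def]
    noncomm_ring
  · intro i
    rw [hBval]
    have h1 : Cm i i = A i i := by
      rw [hC_def, hDinv, hD_def, Matrix.mul_diagonal, Matrix.diagonal_mul,
        mul_comm ((x i)⁻¹) (A i i), mul_assoc, inv_mul_cancel₀ (hx i), mul_one]
    rw [Matrix.add_apply, h1, Matrix.vecMulVec_apply, hq_def, he_def]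
    ring
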